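/- For any sequence of valuations (s_t, b_t) in [0,1]^2 for t = 1,...,T and any K-uniform grid G_K = {0, 1/K, 2/K, ..., 1}, it holds that max_{p ∈ [0,1]} Σ_{t=1}^T GFT_t(p) ≤ 2·max_{p ∈ G_K} Σ_{t=1}^T GFT_t(p) + T/K. -/

import Mathlib

open Finset

/-- Gain from trade of the single price `p` posted to both agents. -/
noncomputable def gftSingle (s b p : ℝ) : ℝ :=
  (if s ≤ p ∧ p ≤ b then (1:ℝ) else 0) * (b - s)

lemma gft_nonneg (s b p : ℝ) : 0 ≤ gftSingle s b p := by
  unfold gftSingle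
  split
  · next h => nlinarith [h.1, h.2]
  · simp

lemma gft_key (s b p q q' : ℝ) (hq : q ≤ p) (hq' : p ≤ q') :
    gftSingle s b p ≤ gftSingle s b q + gftSingle s b q' + (q' - q) := by
  have h2 := gft_nonneg s b q
  have h3 := gft_nonneg s b q'
  by_cases h : s ≤ p ∧ p ≤ b
  · have hval : gftSingle s b p = b - s := by unfold gftSingle; rw [if_pos h]; ring
    by_cases hs : s ≤ q
    · have hv : gftSingle s b q = b - s := by
        unfold gftSingle; rw [if_pos ⟨hs, le_trans hq h.2⟩]; ring
      linarith
    · by_cases hb : q' ≤ b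
      · have hv : gftSingle s b q' = b - s := by
          unfold gftSingle; rw [if_pos ⟨le_trans h.1 hq', hb⟩]; ring
        linarith
      · push_neg at hs hb
        linarith
  · have hv : gftSingle s b p = 0 := by unfold gftSingle; rw [if_neg h]; ring
    linarith

/-- `max_{p∈[0,1]} Σ_t GFT_t(p) ≤ 2·max_{p∈G_K} Σ_t GFT_t(p) + T/K`. -/
theorem stmt_4 (T K : ℕ) (hK : 0 < K) (s b : ℕ → ℝ)
    (hvals : ∀ t, s t ∈ Set.Icc (0:ℝ) 1 ∧ b t ∈ Set.Icc (0:ℝ) 1) :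
    ∀ p ∈ Set.Icc (0:ℝ) 1,
      ∑ t ∈ range T, gftSingle (s t) (b t) p ≤
        2 * ((range (K+1)).sup' nonempty_range_add_one
              (fun i => ∑ t ∈ range T, gftSingle (s t) (b t) ((i:ℝ)/K)))
        + (T:ℝ)/K := by
  intro p hp
  obtain ⟨hp0, hp1⟩ := hp
  set i := min (Nat.floor (p * K)) (K - 1) with hi
  have hKR : (0:ℝ) < K := by exact_mod_cast hK
  have hiK : i ≤ K - 1 := min_le_right _ _
  have hq : (i:ℝ)/K ≤ p := by
    rw [div_le_iff₀ hKR]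
    calc (i:ℝ) ≤ (Nat.floor (p*K) : ℝ) := by exact_mod_cast min_le_left _ _
    _ ≤ p * K := Nat.floor_le (by positivity)
  have hq' : p ≤ ((i+1 : ℕ):ℝ)/K := by
    rw [le_div_iff₀ hKR]
    by_cases hc : Nat.floor (p*K) ≤ K - 1
    · have hie : i = Nat.floor (p*K) := min_eq_left hc
      rw [hie]
      have := Nat.lt_floor_add_one (p*K)
      push_cast
      linarith
    · have hie : i = K - 1 := min_eq_right (by omega)
      rw [hie]
      have hc1 : ((K - 1 + 1 : ℕ):ℝ) = K := by
        have h1 : K - 1 + 1 = K := by omega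
        rw [h1]
      rw [hc1]
      nlinarith
  set M := (range (K+1)).sup' nonempty_range_add_one
      (fun i => ∑ t ∈ range T, gftSingle (s t) (b t) ((i:ℝ)/K)) with hM
  have hM1 : ∑ t ∈ range T, gftSingle (s t) (b t) ((i:ℝ)/K) ≤ M :=
    Finset.le_sup' (f := fun j : ℕ => ∑ t ∈ range T, gftSingle (s t) (b t) ((j:ℝ)/K))
      (show i ∈ range (K+1) from mem_range.mpr (by omega))
  have hM2 : ∑ t ∈ range T, gftSingle (s t) (b t) (((i+1:ℕ):ℝ)/K) ≤ M :=
    Finset.le_sup' (f := fun j : ℕ => ∑ t ∈ range T, gftSingle (s t) (b t) ((j:ℝ)/K))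
      (show i + 1 ∈ range (K+1) from mem_range.mpr (by omega))
  have hdiff : ((i+1:ℕ):ℝ)/K - (i:ℝ)/K = 1/K := by
    push_cast
    field_simp
    ring
  have key : ∑ t ∈ range T, gftSingle (s t) (b t) p ≤
      ∑ t ∈ range T, (gftSingle (s t) (b t) ((i:ℝ)/K)
        + gftSingle (s t) (b t) (((i+1:ℕ):ℝ)/K) + 1/K) := by
    apply Finset.sum_le_sum
    intro t _
    have := gft_key (s t) (b t) p ((i:ℝ)/K) (((i+1:ℕ):ℝ)/K) hq hq'
    linarith
  rw [Finset.sum_add_distrib, Finset.sum_add_distrib, Finset.sum_const,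
    Finset.card_range, nsmul_eq_mul] at key
  have hTK : (T:ℝ) * (1/K) = (T:ℝ)/K := by ring
  linarith
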